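/- The fundamental representation π₃ is irreducible: every ℚ(q)-linear subspace V ⊆ F satisfying π₃(t_{ij})(V) ⊆ V for all 1 ≤ i,j ≤ 7 is either {0} or all of F. -/

import Mathlib

open TensorProduct

noncomputable section

abbrev Fq : Type := RatFunc ℚ

def q : Fq := RatFunc.X

abbrev F : Type := ℕ →₀ Fq

def ket (m : ℕ) : F := Finsupp.single m 1

/-- Linear operator on the Fock space from its action on the basis. -/
def opOf (v : ℕ → F) : F →ₗ[Fq] F := Finsupp.lift F Fq ℕ v

/-- q²-oscillator K -/
def K2 : F →ₗ[Fq] F := opOf fun m => q ^ (2 * m) • ket m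
/-- q²-oscillator A⁺ -/
def Ap : F →ₗ[Fq] F := opOf fun m => ket (m + 1)
/-- q²-oscillator A⁻ -/
def Am : F →ₗ[Fq] F := opOf fun m => (1 - q ^ (4 * m)) • ket (m - 1)
/-- q-oscillator k -/
def kk : F →ₗ[Fq] F := opOf fun m => q ^ m • ket m
/-- q-oscillator a⁺ -/
def ap : F →ₗ[Fq] F := opOf fun m => ket (m + 1)
/-- q-oscillator a⁻ -/
def am : F →ₗ[Fq] F := opOf fun m => (1 - q ^ (2 * m)) • ket (m - 1)

def pi1 (α β μ ν κ σ : Fq) : Matrix (Fin 7) (Fin 7) (F →ₗ[Fq] F) :=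
  !![μ • Am, α • K2, 0, 0, 0, 0, 0;
     β • K2, ν • Ap, 0, 0, 0, 0, 0;
     0, 0, κ • LinearMap.id, 0, 0, 0, 0;
     0, 0, 0, σ • LinearMap.id, 0, 0, 0;
     0, 0, 0, 0, κ⁻¹ • LinearMap.id, 0, 0;
     0, 0, 0, 0, 0, ν⁻¹ • Am, (q ^ 2 * β⁻¹) • K2;
     0, 0, 0, 0, 0, (q ^ 2 * α⁻¹) • K2, μ⁻¹ • Ap]

def pi2 (α β μ ν κ σ : Fq) : Matrix (Fin 7) (Fin 7) (F →ₗ[Fq] F) :=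
  !![κ • LinearMap.id, 0, 0, 0, 0, 0, 0;
     0, μ • Am, α • K2, 0, 0, 0, 0;
     0, β • K2, ν • Ap, 0, 0, 0, 0;
     0, 0, 0, σ • LinearMap.id, 0, 0, 0;
     0, 0, 0, 0, ν⁻¹ • Am, (q ^ 2 * β⁻¹) • K2, 0;
     0, 0, 0, 0, (q ^ 2 * α⁻¹) • K2, μ⁻¹ • Ap, 0;
     0, 0, 0, 0, 0, 0, κ⁻¹ • LinearMap.id]

def pi3 (α μ κa κb : Fq) : Matrix (Fin 7) (Fin 7) (F →ₗ[Fq] F) :=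
  !![κa • LinearMap.id, 0, 0, 0, 0, 0, 0;
     0, κb • LinearMap.id, 0, 0, 0, 0, 0;
     0, 0, μ • (am ∘ₗ am), α • (kk ∘ₗ am), (-((1 + q ^ 2) * μ)⁻¹ * α ^ 2) • (kk ∘ₗ kk), 0, 0;
     0, 0, (-(1 + q ^ 2) * α⁻¹ * μ) • (am ∘ₗ kk), am ∘ₗ ap - kk ∘ₗ kk, (-(q * μ)⁻¹ * α) • (kk ∘ₗ ap), 0, 0;
     0, 0, (-(1 + q ^ 2) * q ^ 2 * α⁻¹ ^ 2 * μ) • (kk ∘ₗ kk), ((1 + q ^ 2) * α⁻¹) • (kk ∘ₗ ap), μ⁻¹ • (ap ∘ₗ ap), 0, 0;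
     0, 0, 0, 0, 0, κb⁻¹ • LinearMap.id, 0;
     0, 0, 0, 0, 0, 0, κa⁻¹ • LinearMap.id]

def rhoB : Fin 7 → ℤ := ![5, 3, 1, 0, -1, -3, -5]

def CB : Matrix (Fin 7) (Fin 7) Fq := fun i j => if (i : ℕ) + (j : ℕ) = 6 then q ^ rhoB j else 0

/- AUX LEMMAS -/
lemma q_ne_zero : q ≠ 0 := RatFunc.X_ne_zero

lemma one_sub_q_pow_ne (n : ℕ) (hn : n ≠ 0) : (1 : Fq) - q ^ n ≠ 0 := by
  have h : (1 : Fq) - q ^ n = algebraMap (Polynomial ℚ) Fq (1 - Polynomial.X ^ n) := by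
    simp [q, ← RatFunc.algebraMap_X, map_pow]
  rw [h]
  intro hc
  have h0 : (1 - Polynomial.X ^ n : Polynomial ℚ) = 0 :=
    (map_eq_zero_iff _ (RatFunc.algebraMap_injective ℚ)).mp hc
  have := congrArg (Polynomial.eval 0) h0
  simp [zero_pow hn] at this

lemma one_add_q_sq_ne : (1 : Fq) + q ^ 2 ≠ 0 := by
  have h : (1 : Fq) + q ^ 2 = algebraMap (Polynomial ℚ) Fq (1 + Polynomial.X ^ 2) := by
    simp [q, ← RatFunc.algebraMap_X, map_pow]
  rw [h]
  intro hc
  have h0 : (1 + Polynomial.X ^ 2 : Polynomial ℚ) = 0 :=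
    (map_eq_zero_iff _ (RatFunc.algebraMap_injective ℚ)).mp hc
  have := congrArg (Polynomial.eval 0) h0
  simp at this

lemma opOf_ket (f : ℕ → F) (m : ℕ) : opOf f (ket m) = f m := by
  simp [opOf, ket, Finsupp.lift_apply, Finsupp.sum_single_index]

lemma smul_ket (c : Fq) (m : ℕ) : c • ket m = Finsupp.single m c := by
  simp [ket, Finsupp.smul_single]

lemma kk_apply (v : F) (n : ℕ) : kk v n = q ^ n * v n := by
  induction v using Finsupp.induction_linear with
  | zero => simp
  | add f g hf hg => simp [map_add, Finsupp.add_apply, hf, hg, mul_add]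
  | single a b =>
    have : (Finsupp.single a b : F) = b • ket a := (smul_ket b a).symm
    rw [this, map_smul, kk, opOf_ket]
    simp [ket, Finsupp.smul_single, Finsupp.single_apply]
    split_ifs with h
    · subst h; ring
    · ring

lemma am_apply (v : F) (n : ℕ) : am v n = (1 - q ^ (2 * (n + 1))) * v (n + 1) := by
  induction v using Finsupp.induction_linear with
  | zero => simp
  | add f g hf hg => simp [map_add, Finsupp.add_apply, hf, hg, mul_add]
  | single a b =>
    have : (Finsupp.single a b : F) = b • ket a := (smul_ket b a).symm
    rw [this, map_smul, am, opOf_ket]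
    simp only [smul_smul, smul_ket, Finsupp.single_apply, Finsupp.smul_apply, smul_eq_mul]
    rcases eq_or_ne a (n + 1) with h | h
    · subst h; simp; ring
    · rw [if_neg h]
      rcases eq_or_ne (a - 1) n with h2 | h2
      · rw [if_pos h2]
        rcases Nat.eq_zero_or_pos a with ha | ha
        · subst ha; simp
        · exact absurd (by omega) h
      · rw [if_neg h2]; ring

lemma Lop_apply (v : F) (n : ℕ) :
    (am ∘ₗ kk) v n = (q ^ (n + 1) * (1 - q ^ (2 * (n + 1)))) * v (n + 1) := by
  simp [LinearMap.comp_apply, am_apply, kk_apply]; ring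

lemma R_ket (m : ℕ) : (kk ∘ₗ ap) (ket m) = q ^ (m + 1) • ket (m + 1) := by
  rw [LinearMap.comp_apply, ap, opOf_ket, kk, opOf_ket]
/-- the fundamental representation π₃ is irreducible. -/
theorem pi3_irreducible
    (α μ κa κb : Fq) (hα : α ≠ 0) (hμ : μ ≠ 0) (hκa : κa ≠ 0) (hκb : κb ≠ 0) :
    ∀ V : Submodule Fq F,
      (∀ i j : Fin 7, ∀ v ∈ V, pi3 α μ κa κb i j v ∈ V) → V = ⊥ ∨ V = ⊤ := by
  intro V hV
  by_cases hbot : V = ⊥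
  · exact Or.inl hbot
  right
  -- the entries we use
  have e32 : pi3 α μ κa κb 3 2 = (-(1 + q ^ 2) * α⁻¹ * μ) • (am ∘ₗ kk) := by
    simp [pi3]
  have e43 : pi3 α μ κa κb 4 3 = ((1 + q ^ 2) * α⁻¹) • (kk ∘ₗ ap) := by
    simp [pi3]
  have hc1 : (-(1 + q ^ 2) * α⁻¹ * μ : Fq) ≠ 0 := by
    exact mul_ne_zero (mul_ne_zero (neg_ne_zero.mpr one_add_q_sq_ne) (inv_ne_zero hα)) hμ
  have hc2 : ((1 + q ^ 2) * α⁻¹ : Fq) ≠ 0 := mul_ne_zero one_add_q_sq_ne (inv_ne_zero hα)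
  have hL : ∀ v ∈ V, (am ∘ₗ kk) v ∈ V := by
    intro v hv
    have := hV 3 2 v hv
    rw [e32] at this
    have h2 := V.smul_mem (-(1 + q ^ 2) * α⁻¹ * μ)⁻¹ this
    rwa [LinearMap.smul_apply, smul_smul, inv_mul_cancel₀ hc1, one_smul] at h2
  have hR : ∀ v ∈ V, (kk ∘ₗ ap) v ∈ V := by
    intro v hv
    have := hV 4 3 v hv
    rw [e43] at this
    have h2 := V.smul_mem ((1 + q ^ 2) * α⁻¹)⁻¹ this
    rwa [LinearMap.smul_apply, smul_smul, inv_mul_cancel₀ hc2, one_smul] at h2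
  -- scalar in lowering is nonzero
  have hs : ∀ n : ℕ, (q ^ (n + 1) * (1 - q ^ (2 * (n + 1))) : Fq) ≠ 0 := fun n =>
    mul_ne_zero (pow_ne_zero _ q_ne_zero) (one_sub_q_pow_ne _ (by omega))
  -- step 1 : ket 0 ∈ V
  have key : ∀ n : ℕ, ∀ v ∈ V, v ≠ 0 → (∀ m, n < m → v m = 0) → ket 0 ∈ V := by
    intro n
    induction n with
    | zero =>
      intro v hv hne hsupp
      have h0 : v 0 ≠ 0 := by
        intro h0
        apply hne
        ext m
        cases m with
        | zero => simpa using h0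
        | succ m => simpa using hsupp (m + 1) (by omega)
      have : ket 0 = (v 0)⁻¹ • v := by
        ext m
        cases m with
        | zero => simp [ket, inv_mul_cancel₀ h0]
        | succ m => simp [ket, Finsupp.single_apply, hsupp (m + 1) (by omega)]
      rw [this]
      exact V.smul_mem _ hv
    | succ n ih =>
      intro v hv hne hsupp
      by_cases hw : (am ∘ₗ kk) v = 0
      · -- then v is supported at 0
        apply ih v hv hne
        intro m hm
        have := congrArg (fun f : F => f (m - 1)) hw
        simp only [Lop_apply, Finsupp.zero_apply] at this
        have hm1 : m - 1 + 1 = m := by omega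
        rw [hm1] at this
        exact (mul_eq_zero.mp this).resolve_left
          (mul_ne_zero (pow_ne_zero _ q_ne_zero) (one_sub_q_pow_ne _ (by omega)))
      · apply ih ((am ∘ₗ kk) v) (hL v hv) hw
        intro m hm
        rw [Lop_apply, hsupp (m + 1) (by omega), mul_zero]
  -- get a nonzero vector
  obtain ⟨v, hv, hvne⟩ := Submodule.ne_bot_iff V |>.mp hbot
  have hket0 : ket 0 ∈ V := by
    apply key (v.support.sup id) v hv hvne
    intro m hm
    by_contra h
    have : m ∈ v.support := Finsupp.mem_support_iff.mpr h
    have h2 := Finset.le_sup (f := id) this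
    simp only [id_eq] at h2
    omega
  -- step 2 : all kets
  have hket : ∀ m, ket m ∈ V := by
    intro m
    induction m with
    | zero => exact hket0
    | succ m ih =>
      have := hR (ket m) ih
      rw [R_ket] at this
      have h2 := V.smul_mem (q ^ (m + 1) : Fq)⁻¹ this
      rwa [smul_smul, inv_mul_cancel₀ (pow_ne_zero _ q_ne_zero), one_smul] at h2
  -- conclude
  rw [Submodule.eq_top_iff']
  intro x
  induction x using Finsupp.induction_linear with
  | zero => exact V.zero_mem
  | add f g hf hg => exact V.add_mem hf hg
  | single a b =>
    have : (Finsupp.single a b : F) = b • ket a := (smul_ket b a).symm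
    rw [this]
    exact V.smul_mem _ (hket a)
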